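/- Let u, w ∈ M_n(ℂ) be complex Hadamard matrices. Define u₁ := (I_n ⊗ u)D_u, u₂ := u₁(u ⊗ I_n), w₁ := (I_n ⊗ w)D_w, and V₀ := Σ_{i,j=1}^n E_{ij} ⊗ E_{ji} (the flip). Then BU(u,w;0) := u₂·w₁·V₀ ∈ M_n(ℂ) ⊗ M_n(ℂ) is a biunitary matrix: both it and its block transpose are unitary. -/

import Mathlib

open Matrix Kronecker

/-- A complex Hadamard matrix of order `n`. -/
def IsCHM {n : ℕ} (u : Matrix (Fin n) (Fin n) ℂ) : Prop :=
  u ∈ Matrix.unitaryGroup (Fin n) ℂ ∧ ∀ i j, ‖u i j‖ = 1 / Real.sqrt n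

/-- `D_u := √n · Σ_{i,j} conj(u_{ij}) (E_{ii} ⊗ E_{jj})`. -/
noncomputable def Du {n : ℕ} (u : Matrix (Fin n) (Fin n) ℂ) :
    Matrix (Fin n × Fin n) (Fin n × Fin n) ℂ :=
  ((Real.sqrt n : ℝ) : ℂ) •
    ∑ i : Fin n, ∑ j : Fin n, (starRingEnd ℂ) (u i j) •
      (Matrix.single i i (1 : ℂ) ⊗ₖ Matrix.single j j (1 : ℂ))

/-- The block transpose: `x̃_{αa}^{βb} := x_{βa}^{αb}`. -/
def blockTranspose {n : ℕ} (x : Matrix (Fin n × Fin n) (Fin n × Fin n) ℂ) :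
    Matrix (Fin n × Fin n) (Fin n × Fin n) ℂ :=
  fun p q => x (q.1, p.2) (p.1, q.2)

/-- The flip `V₀ := Σ_{i,j} E_{ij} ⊗ E_{ji}`. -/
noncomputable def V0 (n : ℕ) : Matrix (Fin n × Fin n) (Fin n × Fin n) ℂ :=
  ∑ i : Fin n, ∑ j : Fin n,
    Matrix.single i j (1 : ℂ) ⊗ₖ Matrix.single j i (1 : ℂ)

lemma Du_apply {n : ℕ} (u : Matrix (Fin n) (Fin n) ℂ) (p q : Fin n × Fin n) :
    Du u p q = if q = p then ((Real.sqrt n : ℝ) : ℂ) * (starRingEnd ℂ) (u p.1 p.2) else 0 := by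
  obtain ⟨a, b⟩ := p; obtain ⟨c, d⟩ := q
  simp [Du, Matrix.sum_apply, Matrix.single, kroneckerMap_apply, ite_and,
    Finset.sum_ite_eq, Prod.ext_iff, mul_comm]
  aesop

lemma V0_apply {n : ℕ} (p q : Fin n × Fin n) :
    V0 n p q = if q.1 = p.2 ∧ q.2 = p.1 then 1 else 0 := by
  obtain ⟨a, b⟩ := p; obtain ⟨c, d⟩ := q
  simp [V0, Matrix.sum_apply, Matrix.single, kroneckerMap_apply, ite_and,
    Finset.sum_ite_eq]
  aesop

lemma u1_apply {n : ℕ} (u : Matrix (Fin n) (Fin n) ℂ) (p q : Fin n × Fin n) :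
    (((1 : Matrix (Fin n) (Fin n) ℂ) ⊗ₖ u) * Du u) p q =
      if q.1 = p.1 then
        ((Real.sqrt n : ℝ) : ℂ) * (u p.2 q.2 * (starRingEnd ℂ) (u p.1 q.2)) else 0 := by
  simp only [Matrix.mul_apply, Du_apply, mul_ite, mul_zero, Finset.sum_ite_eq,
    Finset.mem_univ, if_true, kroneckerMap_apply, Matrix.one_apply]
  obtain ⟨a, b⟩ := p; obtain ⟨c, d⟩ := q
  by_cases hc : c = a
  · subst hc; simp; ring
  · simp only [if_neg hc, if_neg (fun h : a = c => hc h.symm)]; ring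

lemma u2_apply {n : ℕ} (u : Matrix (Fin n) (Fin n) ℂ) (p q : Fin n × Fin n) :
    (((1 : Matrix (Fin n) (Fin n) ℂ) ⊗ₖ u) * Du u *
        (u ⊗ₖ (1 : Matrix (Fin n) (Fin n) ℂ))) p q =
      ((Real.sqrt n : ℝ) : ℂ) *
        (u p.2 q.2 * (starRingEnd ℂ) (u p.1 q.2) * u p.1 q.1) := by
  rw [Matrix.mul_apply]
  simp only [u1_apply, kroneckerMap_apply, Matrix.one_apply, Fintype.sum_prod_type,
    ite_mul, zero_mul, mul_ite, mul_zero, mul_one]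
  simp [Finset.sum_ite_eq, Finset.sum_ite_eq']
  ring

lemma w1V0_apply {n : ℕ} (w : Matrix (Fin n) (Fin n) ℂ) (p q : Fin n × Fin n) :
    (((1 : Matrix (Fin n) (Fin n) ℂ) ⊗ₖ w) * Du w * V0 n) p q =
      if q.2 = p.1 then
        ((Real.sqrt n : ℝ) : ℂ) * (w p.2 q.1 * (starRingEnd ℂ) (w q.2 q.1)) else 0 := by
  rw [Matrix.mul_apply]
  simp only [u1_apply, V0_apply, Fintype.sum_prod_type, ite_and, ite_mul, zero_mul,
    mul_ite, mul_zero, mul_one]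
  simp [Finset.sum_ite_eq, Finset.sum_ite_eq']
  rcases eq_or_ne q.2 p.1 with h | h <;> simp [h]

lemma B_apply {n : ℕ} (u w : Matrix (Fin n) (Fin n) ℂ) (p q : Fin n × Fin n) :
    ((((1 : Matrix (Fin n) (Fin n) ℂ) ⊗ₖ u) * Du u *
        (u ⊗ₖ (1 : Matrix (Fin n) (Fin n) ℂ))) *
      (((1 : Matrix (Fin n) (Fin n) ℂ) ⊗ₖ w) * Du w) * V0 n) p q =
    ((Real.sqrt n : ℝ) : ℂ) * ((Real.sqrt n : ℝ) : ℂ) *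
      (u p.1 q.2 * (starRingEnd ℂ) (w q.2 q.1) *
        ∑ f : Fin n, u p.2 f * (starRingEnd ℂ) (u p.1 f) * w f q.1) := by
  have h1 := u2_apply u
  have h2 := w1V0_apply w
  set X := ((1 : Matrix (Fin n) (Fin n) ℂ) ⊗ₖ u) * Du u *
      (u ⊗ₖ (1 : Matrix (Fin n) (Fin n) ℂ)) with hX
  set Y := ((1 : Matrix (Fin n) (Fin n) ℂ) ⊗ₖ w) * Du w * V0 n with hY
  rw [show X * (((1 : Matrix (Fin n) (Fin n) ℂ) ⊗ₖ w) * Du w) * V0 n =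
    X * Y from by rw [hY]; simp only [Matrix.mul_assoc]]
  rw [Matrix.mul_apply]
  simp only [h1, h2, Fintype.sum_prod_type, mul_ite, mul_zero]
  rw [Finset.sum_comm]
  simp only [Finset.sum_ite_eq, Finset.mem_univ, if_true]
  simp only [Finset.mul_sum]
  exact Fintype.sum_congr _ _ fun f => by ring

lemma sum_factor {n : ℕ} (c : ℂ) (A C : Fin n → ℂ) :
    ∑ g : Fin n, ∑ h : Fin n, c * A h * C g = c * (∑ h, A h) * (∑ g, C g) := by
  rw [Finset.sum_comm]
  simp only [← Finset.sum_mul, ← Finset.mul_sum]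

lemma core {n : ℕ} (c : Fin n → Fin n → ℂ) (A C : Fin n → ℂ)
    (hc : ∀ g h, c g h = ((n : ℂ))⁻¹) :
    ∑ g : Fin n, ∑ h : Fin n, (n : ℂ) * (n : ℂ) * c g h * A h * C g =
      (n : ℂ) * (∑ h, A h) * (∑ g, C g) := by
  rcases Nat.eq_zero_or_pos n with h | h
  · subst h; simp
  · have hn : (n : ℂ) ≠ 0 := Nat.cast_ne_zero.2 h.ne'
    have : ∀ g h : Fin n, (n : ℂ) * (n : ℂ) * c g h * A h * C g = (n : ℂ) * A h * C g := by
      intro g h'; rw [hc]; field_simp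
    calc ∑ g : Fin n, ∑ h : Fin n, (n : ℂ) * (n : ℂ) * c g h * A h * C g
        = ∑ g : Fin n, ∑ h : Fin n, (n : ℂ) * A h * C g :=
          Fintype.sum_congr _ _ fun g => Fintype.sum_congr _ _ fun h' => this g h'
      _ = _ := sum_factor _ _ _

lemma sum_mul_conj_sum {n : ℕ} (w : Matrix (Fin n) (Fin n) ℂ)
    (hw : ∀ f f', (∑ g, w f g * (starRingEnd ℂ) (w f' g)) = if f = f' then 1 else 0)
    (p p' : Fin n → ℂ) :
    ∑ g : Fin n, (∑ f, p f * w f g) * (starRingEnd ℂ) (∑ f, p' f * w f g) =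
      ∑ f, p f * (starRingEnd ℂ) (p' f) := by
  simp only [map_sum, Finset.sum_mul_sum]
  rw [Finset.sum_comm]
  have key : ∀ y j : Fin n, (∑ x, p y * w y x * (starRingEnd ℂ) (p' j * w j x)) =
      p y * (starRingEnd ℂ) (p' j) * (if y = j then 1 else 0) := by
    intro y j
    rw [← hw y j, Finset.mul_sum]
    exact Fintype.sum_congr _ _ fun x => by
      simp only [_root_.map_mul]; ring
  calc ∑ y : Fin n, ∑ x : Fin n, ∑ j : Fin n, p y * w y x * (starRingEnd ℂ) (p' j * w j x)
      = ∑ y : Fin n, ∑ j : Fin n, ∑ x : Fin n, p y * w y x * (starRingEnd ℂ) (p' j * w j x) :=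
        Fintype.sum_congr _ _ fun y => Finset.sum_comm
    _ = ∑ y : Fin n, ∑ j : Fin n, p y * (starRingEnd ℂ) (p' j) * (if y = j then 1 else 0) :=
        Fintype.sum_congr _ _ fun y => Fintype.sum_congr _ _ fun j => key y j
    _ = _ := by
        simp [mul_ite, Finset.sum_ite_eq, Finset.sum_ite_eq']

noncomputable def Sfun {n : ℕ} (u w : Matrix (Fin n) (Fin n) ℂ) (a b g : Fin n) : ℂ :=
  ∑ f : Fin n, u b f * (starRingEnd ℂ) (u a f) * w f g

lemma B_apply' {n : ℕ} (u w : Matrix (Fin n) (Fin n) ℂ) (p q : Fin n × Fin n) :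
    ((((1 : Matrix (Fin n) (Fin n) ℂ) ⊗ₖ u) * Du u *
        (u ⊗ₖ (1 : Matrix (Fin n) (Fin n) ℂ))) *
      (((1 : Matrix (Fin n) (Fin n) ℂ) ⊗ₖ w) * Du w) * V0 n) p q =
    (n : ℂ) * (u p.1 q.2 * (starRingEnd ℂ) (w q.2 q.1) * Sfun u w p.1 p.2 q.1) := by
  rw [B_apply, Sfun, ← Complex.ofReal_mul, Real.mul_self_sqrt (Nat.cast_nonneg n)]
  norm_num

lemma row_orth {n : ℕ} {u : Matrix (Fin n) (Fin n) ℂ}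
    (h : u ∈ Matrix.unitaryGroup (Fin n) ℂ) (i j : Fin n) :
    (∑ k, u i k * (starRingEnd ℂ) (u j k)) = if i = j then 1 else 0 := by
  have h2 : u * star u = 1 := ((Unitary.mem_iff).1 h).2
  have := congrFun (congrFun h2 i) j
  simpa [Matrix.mul_apply, Matrix.star_apply, Matrix.one_apply] using this

lemma col_orth {n : ℕ} {u : Matrix (Fin n) (Fin n) ℂ}
    (h : u ∈ Matrix.unitaryGroup (Fin n) ℂ) (i j : Fin n) :
    (∑ k, (starRingEnd ℂ) (u k i) * u k j) = if i = j then 1 else 0 := by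
  have h2 : star u * u = 1 := ((Unitary.mem_iff).1 h).1
  have := congrFun (congrFun h2 i) j
  simpa [Matrix.mul_apply, Matrix.star_apply, Matrix.one_apply] using this

lemma mod_fact {n : ℕ} {u : Matrix (Fin n) (Fin n) ℂ} (hu : IsCHM u) (i j : Fin n) :
    u i j * (starRingEnd ℂ) (u i j) = ((n : ℂ))⁻¹ := by
  rw [Complex.mul_conj, ← Complex.sq_norm, hu.2, div_pow, one_pow,
    Real.sq_sqrt (Nat.cast_nonneg n), one_div]
  push_cast
  ring

/-- For complex Hadamard matrices `u, w` of order `n`, the matrix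
`BU(u,w;0) := u₂·w₁·V₀` (with `u₁ = (I⊗u)D_u`, `u₂ = u₁(u⊗I)`, `w₁ = (I⊗w)D_w`)
is biunitary: both it and its block transpose are unitary. -/
theorem stmt14 (n : ℕ) (u w : Matrix (Fin n) (Fin n) ℂ)
    (hu : IsCHM u) (hw : IsCHM w)
    (B : Matrix (Fin n × Fin n) (Fin n × Fin n) ℂ)
    (hB : B = (((1 : Matrix (Fin n) (Fin n) ℂ) ⊗ₖ u) * Du u *
        (u ⊗ₖ (1 : Matrix (Fin n) (Fin n) ℂ))) *
      (((1 : Matrix (Fin n) (Fin n) ℂ) ⊗ₖ w) * Du w) * V0 n) :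
    B ∈ Matrix.unitaryGroup (Fin n × Fin n) ℂ ∧
      blockTranspose B ∈ Matrix.unitaryGroup (Fin n × Fin n) ℂ := by
  have hBap : ∀ p q, B p q =
      (n : ℂ) * (u p.1 q.2 * (starRingEnd ℂ) (w q.2 q.1) * Sfun u w p.1 p.2 q.1) := by
    intro p q; rw [hB, B_apply']
  have hn0 : ∀ (_ : Fin n), (n : ℂ) ≠ 0 := fun i =>
    Nat.cast_ne_zero.2 i.pos.ne'
  constructor
  · rw [Matrix.mem_unitaryGroup_iff]
    ext ⟨a, b⟩ ⟨a', b'⟩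
    rw [Matrix.mul_apply]
    rw [Fintype.sum_prod_type]
    have hterm : ∀ g h : Fin n, B (a, b) (g, h) * (star B) (g, h) (a', b') =
        (n : ℂ) * (n : ℂ) * (w h g * (starRingEnd ℂ) (w h g)) *
          (u a h * (starRingEnd ℂ) (u a' h)) *
          (Sfun u w a b g * (starRingEnd ℂ) (Sfun u w a' b' g)) := by
      intro g h
      rw [Matrix.star_apply, hBap, hBap]
      simp only [Matrix.star_apply, RCLike.star_def, _root_.map_mul, map_natCast,
        Complex.conj_conj]
      ring
    calc (∑ g : Fin n, ∑ h : Fin n, B (a, b) (g, h) * (star B) (g, h) (a', b'))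
        = ∑ g : Fin n, ∑ h : Fin n, (n : ℂ) * (n : ℂ) *
            (w h g * (starRingEnd ℂ) (w h g)) *
            (u a h * (starRingEnd ℂ) (u a' h)) *
            (Sfun u w a b g * (starRingEnd ℂ) (Sfun u w a' b' g)) :=
          Fintype.sum_congr _ _ fun g => Fintype.sum_congr _ _ fun h => hterm g h
      _ = (n : ℂ) * (∑ h, u a h * (starRingEnd ℂ) (u a' h)) *
            (∑ g, Sfun u w a b g * (starRingEnd ℂ) (Sfun u w a' b' g)) :=
          core _ _ _ fun g h => mod_fact hw h g
      _ = (1 : Matrix (Fin n × Fin n) (Fin n × Fin n) ℂ) (a, b) (a', b') := by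
          rw [row_orth hu.1 a a']
          simp only [Sfun]
          rw [sum_mul_conj_sum w (row_orth hw.1)
            (fun f => u b f * (starRingEnd ℂ) (u a f))
            (fun f => u b' f * (starRingEnd ℂ) (u a' f))]
          rcases eq_or_ne a a' with rfl | hne
          · have hS : (∑ f, (u b f * (starRingEnd ℂ) (u a f)) *
                (starRingEnd ℂ) (u b' f * (starRingEnd ℂ) (u a f))) =
                ((n : ℂ))⁻¹ * ∑ f, u b f * (starRingEnd ℂ) (u b' f) := by
              rw [Finset.mul_sum]
              refine Fintype.sum_congr _ _ fun f => ?_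
              have hm := mod_fact hu a f
              calc (u b f * (starRingEnd ℂ) (u a f)) *
                  (starRingEnd ℂ) (u b' f * (starRingEnd ℂ) (u a f))
                  = (u a f * (starRingEnd ℂ) (u a f)) *
                    (u b f * (starRingEnd ℂ) (u b' f)) := by
                    simp only [_root_.map_mul, Complex.conj_conj]; ring
                _ = _ := by rw [hm]
            rw [if_pos rfl, hS, row_orth hu.1 b b', Matrix.one_apply]
            rcases eq_or_ne b b' with rfl | hb
            · simp [mul_inv_cancel₀ (hn0 a)]
            · simp [hb, Prod.ext_iff]
          · simp [hne, Matrix.one_apply, Prod.ext_iff]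
  · rw [Matrix.mem_unitaryGroup_iff]
    ext ⟨a, b⟩ ⟨a', b'⟩
    rw [Matrix.mul_apply]
    rw [Fintype.sum_prod_type]
    have hSrw : ∀ g c d, Sfun u w g c d =
        ∑ f, (u c f * w f d) * (fun f g => (starRingEnd ℂ) (u g f)) f g := by
      intro g c d
      refine Fintype.sum_congr _ _ fun f => ?_
      simp only [Sfun]; ring
    have hterm : ∀ g h : Fin n,
        blockTranspose B (a, b) (g, h) * (star (blockTranspose B)) (g, h) (a', b') =
        (n : ℂ) * (n : ℂ) * (u g h * (starRingEnd ℂ) (u g h)) *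
          ((starRingEnd ℂ) (w h a) * w h a') *
          (Sfun u w g b a * (starRingEnd ℂ) (Sfun u w g b' a')) := by
      intro g h
      rw [Matrix.star_apply, blockTranspose, blockTranspose]
      simp only [hBap]
      simp only [RCLike.star_def, _root_.map_mul, map_natCast, Complex.conj_conj]
      ring
    calc (∑ g : Fin n, ∑ h : Fin n,
          blockTranspose B (a, b) (g, h) * (star (blockTranspose B)) (g, h) (a', b'))
        = ∑ g : Fin n, ∑ h : Fin n, (n : ℂ) * (n : ℂ) *
            (u g h * (starRingEnd ℂ) (u g h)) *
            ((starRingEnd ℂ) (w h a) * w h a') *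
            (Sfun u w g b a * (starRingEnd ℂ) (Sfun u w g b' a')) :=
          Fintype.sum_congr _ _ fun g => Fintype.sum_congr _ _ fun h => hterm g h
      _ = (n : ℂ) * (∑ h, (starRingEnd ℂ) (w h a) * w h a') *
            (∑ g, Sfun u w g b a * (starRingEnd ℂ) (Sfun u w g b' a')) :=
          core _ _ _ fun g h => mod_fact hu g h
      _ = (1 : Matrix (Fin n × Fin n) (Fin n × Fin n) ℂ) (a, b) (a', b') := by
          rw [col_orth hw.1 a a']
          have hcol : ∀ f f', (∑ g, (fun f g => (starRingEnd ℂ) (u g f)) f g *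
              (starRingEnd ℂ) ((fun f g => (starRingEnd ℂ) (u g f)) f' g)) =
              if f = f' then 1 else 0 := by
            intro f f'
            simp only [Complex.conj_conj]
            rw [← col_orth hu.1 f f']
          have hSg : (∑ g, Sfun u w g b a * (starRingEnd ℂ) (Sfun u w g b' a')) =
              ∑ f, (u b f * w f a) * (starRingEnd ℂ) (u b' f * w f a') := by
            calc (∑ g, Sfun u w g b a * (starRingEnd ℂ) (Sfun u w g b' a'))
                = ∑ g, (∑ f, (u b f * w f a) * (fun f g => (starRingEnd ℂ) (u g f)) f g) *
                  (starRingEnd ℂ)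
                    (∑ f, (u b' f * w f a') * (fun f g => (starRingEnd ℂ) (u g f)) f g) := by
                  refine Fintype.sum_congr _ _ fun g => ?_
                  rw [← hSrw g b a, ← hSrw g b' a']
              _ = _ := sum_mul_conj_sum _ hcol _ _
          rw [hSg]
          rcases eq_or_ne a a' with rfl | hne
          · have hS : (∑ f, (u b f * w f a) * (starRingEnd ℂ) (u b' f * w f a)) =
                ((n : ℂ))⁻¹ * ∑ f, u b f * (starRingEnd ℂ) (u b' f) := by
              rw [Finset.mul_sum]
              refine Fintype.sum_congr _ _ fun f => ?_
              have hm := mod_fact hw f a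
              calc (u b f * w f a) * (starRingEnd ℂ) (u b' f * w f a)
                  = (w f a * (starRingEnd ℂ) (w f a)) *
                    (u b f * (starRingEnd ℂ) (u b' f)) := by
                    simp only [_root_.map_mul]; ring
                _ = _ := by rw [hm]
            rw [if_pos rfl, hS, row_orth hu.1 b b', Matrix.one_apply]
            rcases eq_or_ne b b' with rfl | hb
            · simp [mul_inv_cancel₀ (hn0 a)]
            · simp [hb, Prod.ext_iff]
          · simp [hne, Matrix.one_apply, Prod.ext_iff]
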